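/- Let n_1, n_2 ≥ 1, ℓ_1, ℓ_2 ≥ 0, m_1 ≤ ℓ_1 n_1 and m_2 ≤ ℓ_2 n_2. If A ∈ M_{n_1×n_1}(R_{≤ℓ_1}) is (ℓ_1,q^{m_1})-weakly Hadamard and B ∈ M_{n_2×n_2}(R_{≤ℓ_2}) is (ℓ_2,q^{m_2})-weakly Hadamard, then the Kronecker product A ⊗ B is an (ℓ_1+ℓ_2, q^{m_1 n_2 + m_2 n_1})-weakly Hadamard matrix. -/
import Mathlib


open scoped NNReal

open Classical in
/-- The absolute value `|f| = q^{-ν(f)}` on `K = Fq((x⁻¹))`, realized as the Laurent series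
field `Fq((t))` with `t = x⁻¹`, so that the valuation `ν` is the `t`-adic order. -/
noncomputable def kabs (Fq : Type) [Field Fq] [Fintype Fq] (f : LaurentSeries Fq) : ℝ≥0 :=
  if f = 0 then 0 else (Fintype.card Fq : ℝ≥0) ^ (-(HahnSeries.order f))

/-- The embedding of the polynomial ring `R = Fq[x]` into `K = Fq((x⁻¹))`, sending `x` to
`t⁻¹`, i.e. to the Laurent series `single (-1) 1`. -/
noncomputable def polyToK (Fq : Type) [Field Fq] [Fintype Fq] (p : Polynomial Fq) :
    LaurentSeries Fq :=
  Polynomial.eval₂ HahnSeries.C (HahnSeries.single (-1 : ℤ) (1 : Fq)) p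

/-- The infinity norm on `K^ι`, `K = Fq((x⁻¹))`. -/
noncomputable def vnorm (Fq : Type) [Field Fq] [Fintype Fq] {ι : Type} [Fintype ι]
    (v : ι → LaurentSeries Fq) : ℝ≥0 :=
  Finset.univ.sup fun i => kabs Fq (v i)

/-- A (finite) family of vectors of `K^ι₁` is orthogonal if its members are nonzero and the
norm of any linear combination of them is the maximum of the norms of the summands. -/
def IsOrthTuple (Fq : Type) [Field Fq] [Fintype Fq] {ι₁ ι₂ : Type} [Fintype ι₁] [Fintype ι₂]
    (u : ι₂ → ι₁ → LaurentSeries Fq) : Prop :=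
  (∀ j, u j ≠ 0) ∧
    ∀ c : ι₂ → LaurentSeries Fq,
      vnorm Fq (∑ j, c j • u j) = Finset.univ.sup fun j => vnorm Fq (c j • u j)

/-- A square matrix over `R = Fq[x]` is `(l, q^m)`-Hadamard if its entries have degree at
most `l`, its columns form an orthogonal set in `K^ι`, and `|det| = q^m`. -/
def IsHadamard (Fq : Type) [Field Fq] [Fintype Fq] {ι : Type} [Fintype ι] [DecidableEq ι]
    (l m : ℕ) (A : Matrix ι ι (Polynomial Fq)) : Prop :=
  (∀ i j, (A i j).degree ≤ (l : ℕ)) ∧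
    IsOrthTuple Fq (fun j i => polyToK Fq (A i j)) ∧
    kabs Fq (polyToK Fq A.det) = (Fintype.card Fq : ℝ≥0) ^ m

/-- Two vectors of `K^ι₁` are orthogonal if the norm of any linear combination of them is
the maximum of the norms of the summands. -/
def IsOrthPair (Fq : Type) [Field Fq] [Fintype Fq] {ι₁ : Type} [Fintype ι₁]
    (u v : ι₁ → LaurentSeries Fq) : Prop :=
  ∀ a b : LaurentSeries Fq,
    vnorm Fq (a • u + b • v) = max (vnorm Fq (a • u)) (vnorm Fq (b • v))

/-- A (finite) family of vectors of `K^ι₁` is weakly orthogonal if its members are nonzero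
and pairwise orthogonal. -/
def IsWOrthTuple (Fq : Type) [Field Fq] [Fintype Fq] {ι₁ ι₂ : Type} [Fintype ι₁]
    (u : ι₂ → ι₁ → LaurentSeries Fq) : Prop :=
  (∀ j, u j ≠ 0) ∧ ∀ j j' : ι₂, j ≠ j' → IsOrthPair Fq (u j) (u j')

/-- A square matrix over `R = Fq[x]` is `(l, q^m)`-weakly Hadamard if its entries have degree
at most `l`, its columns form a weakly orthogonal set in `K^ι`, and `|det| = q^m`. -/
def IsWeaklyHadamard (Fq : Type) [Field Fq] [Fintype Fq] {ι : Type} [Fintype ι]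
    [DecidableEq ι] (l m : ℕ) (A : Matrix ι ι (Polynomial Fq)) : Prop :=
  (∀ i j, (A i j).degree ≤ (l : ℕ)) ∧
    IsWOrthTuple Fq (fun j i => polyToK Fq (A i j)) ∧
    kabs Fq (polyToK Fq A.det) = (Fintype.card Fq : ℝ≥0) ^ m

section Aux

variable (Fq : Type) [Field Fq] [Fintype Fq]

lemma kabs_mul' (f g : LaurentSeries Fq) : kabs Fq (f * g) = kabs Fq f * kabs Fq g := by
  classical
  unfold kabs
  by_cases hf : f = 0
  · simp [hf]
  by_cases hg : g = 0
  · simp [hg]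
  have hfg : f * g ≠ 0 := mul_ne_zero hf hg
  have hq : (Fintype.card Fq : ℝ≥0) ≠ 0 := by
    exact_mod_cast Fintype.card_ne_zero
  rw [if_neg hf, if_neg hg, if_neg hfg, HahnSeries.order_mul hf hg, neg_add, zpow_add₀ hq]

lemma kabs_one' : kabs Fq (1 : LaurentSeries Fq) = 1 := by
  unfold kabs
  rw [if_neg one_ne_zero, HahnSeries.order_one]
  simp

lemma kabs_pow' (f : LaurentSeries Fq) (n : ℕ) : kabs Fq (f ^ n) = kabs Fq f ^ n := by
  induction n with
  | zero => simpa using kabs_one' Fq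
  | succ n ih => rw [pow_succ, pow_succ, kabs_mul', ih]

lemma polyToK_mul (p q : Polynomial Fq) :
    polyToK Fq (p * q) = polyToK Fq p * polyToK Fq q := by
  unfold polyToK
  exact Polynomial.eval₂_mul _ _

lemma polyToK_pow (p : Polynomial Fq) (n : ℕ) :
    polyToK Fq (p ^ n) = polyToK Fq p ^ n := by
  induction n with
  | zero =>
      unfold polyToK
      simp
  | succ n ih => rw [pow_succ, pow_succ, polyToK_mul, ih]

lemma vnorm_smul {ι : Type} [Fintype ι] (a : LaurentSeries Fq) (v : ι → LaurentSeries Fq) :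
    vnorm Fq (a • v) = kabs Fq a * vnorm Fq v := by
  unfold vnorm
  rw [NNReal.mul_finset_sup]
  refine Finset.sup_congr rfl fun i _ => ?_
  simp [kabs_mul']

lemma vnorm_kron {n₁ n₂ : ℕ} (P : Fin n₁ → LaurentSeries Fq) (Q : Fin n₂ → LaurentSeries Fq) :
    vnorm Fq (fun i : Fin n₁ × Fin n₂ => P i.1 * Q i.2) = vnorm Fq P * vnorm Fq Q := by
  unfold vnorm
  rw [← Finset.univ_product_univ, Finset.sup_product_left]
  have h1 : ∀ i₁ : Fin n₁, (Finset.univ.sup fun i₂ : Fin n₂ => kabs Fq (P i₁ * Q i₂))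
      = kabs Fq (P i₁) * Finset.univ.sup fun i₂ => kabs Fq (Q i₂) := by
    intro i₁
    rw [NNReal.mul_finset_sup]
    exact Finset.sup_congr rfl fun i₂ _ => kabs_mul' Fq _ _
  calc (Finset.univ.sup fun i₁ => Finset.univ.sup fun i₂ => kabs Fq (P i₁ * Q i₂))
      = Finset.univ.sup fun i₁ =>
          (Finset.univ.sup fun i₂ => kabs Fq (Q i₂)) * kabs Fq (P i₁) := by
        refine Finset.sup_congr rfl fun i₁ _ => ?_
        rw [h1 i₁, mul_comm]
    _ = _ := by rw [← NNReal.mul_finset_sup, mul_comm]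

lemma orth_kron_left {n₁ n₂ : ℕ} (P P' : Fin n₁ → LaurentSeries Fq)
    (Q Q' : Fin n₂ → LaurentSeries Fq) (h : IsOrthPair Fq P P') :
    IsOrthPair Fq (fun i : Fin n₁ × Fin n₂ => P i.1 * Q i.2)
      (fun i : Fin n₁ × Fin n₂ => P' i.1 * Q' i.2) := by
  intro a b
  have key : ∀ i₂ : Fin n₂,
      (Finset.univ.sup fun i₁ : Fin n₁ =>
        kabs Fq (a * (P i₁ * Q i₂) + b * (P' i₁ * Q' i₂)))
      = max (kabs Fq a * kabs Fq (Q i₂) * vnorm Fq P)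
          (kabs Fq b * kabs Fq (Q' i₂) * vnorm Fq P') := by
    intro i₂
    have h2 := h (a * Q i₂) (b * Q' i₂)
    have e1 : (Finset.univ.sup fun i₁ : Fin n₁ =>
        kabs Fq (a * (P i₁ * Q i₂) + b * (P' i₁ * Q' i₂)))
        = vnorm Fq ((a * Q i₂) • P + (b * Q' i₂) • P') := by
      refine Finset.sup_congr rfl fun i₁ _ => ?_
      simp only [Pi.add_apply, Pi.smul_apply, smul_eq_mul]
      congr 1
      ring
    rw [e1, h2, vnorm_smul, vnorm_smul, kabs_mul', kabs_mul']
  have lhs : vnorm Fq (a • (fun i : Fin n₁ × Fin n₂ => P i.1 * Q i.2)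
      + b • (fun i : Fin n₁ × Fin n₂ => P' i.1 * Q' i.2))
      = max (kabs Fq a * (vnorm Fq P * vnorm Fq Q))
          (kabs Fq b * (vnorm Fq P' * vnorm Fq Q')) := by
    unfold vnorm
    rw [← Finset.univ_product_univ, Finset.sup_product_right]
    calc (Finset.univ.sup fun i₂ : Fin n₂ => Finset.univ.sup fun i₁ : Fin n₁ =>
            kabs Fq ((a • (fun i : Fin n₁ × Fin n₂ => P i.1 * Q i.2)
              + b • fun i : Fin n₁ × Fin n₂ => P' i.1 * Q' i.2) (i₁, i₂)))
        = Finset.univ.sup fun i₂ : Fin n₂ =>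
            max (kabs Fq a * kabs Fq (Q i₂) * vnorm Fq P)
              (kabs Fq b * kabs Fq (Q' i₂) * vnorm Fq P') := by
          refine Finset.sup_congr rfl fun i₂ _ => ?_
          rw [← key i₂]
          rfl
      _ = (Finset.univ.sup fun i₂ : Fin n₂ => kabs Fq a * kabs Fq (Q i₂) * vnorm Fq P)
            ⊔ (Finset.univ.sup fun i₂ : Fin n₂ =>
              kabs Fq b * kabs Fq (Q' i₂) * vnorm Fq P') := by
          rw [← Finset.sup_sup]
          rfl
      _ = _ := by
          have e2 : (Finset.univ.sup fun i₂ : Fin n₂ =>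
              kabs Fq a * kabs Fq (Q i₂) * vnorm Fq P)
              = kabs Fq a * (vnorm Fq P * vnorm Fq Q) := by
            rw [show (kabs Fq a * (vnorm Fq P * vnorm Fq Q))
                = (kabs Fq a * vnorm Fq P) * vnorm Fq Q by ring]
            unfold vnorm
            rw [NNReal.mul_finset_sup]
            exact (Finset.sup_congr rfl fun i₂ _ => by ring).symm
          have e3 : (Finset.univ.sup fun i₂ : Fin n₂ =>
              kabs Fq b * kabs Fq (Q' i₂) * vnorm Fq P')
              = kabs Fq b * (vnorm Fq P' * vnorm Fq Q') := by
            rw [show (kabs Fq b * (vnorm Fq P' * vnorm Fq Q'))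
                = (kabs Fq b * vnorm Fq P') * vnorm Fq Q' by ring]
            unfold vnorm
            rw [NNReal.mul_finset_sup]
            exact (Finset.sup_congr rfl fun i₂ _ => by ring).symm
          rw [e2, e3]
          rfl
  rw [lhs, vnorm_smul, vnorm_smul, vnorm_kron, vnorm_kron]

lemma orth_kron_right {n₁ n₂ : ℕ} (P P' : Fin n₁ → LaurentSeries Fq)
    (Q Q' : Fin n₂ → LaurentSeries Fq) (h : IsOrthPair Fq Q Q') :
    IsOrthPair Fq (fun i : Fin n₁ × Fin n₂ => P i.1 * Q i.2)
      (fun i : Fin n₁ × Fin n₂ => P' i.1 * Q' i.2) := by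
  intro a b
  have key : ∀ i₁ : Fin n₁,
      (Finset.univ.sup fun i₂ : Fin n₂ =>
        kabs Fq (a * (P i₁ * Q i₂) + b * (P' i₁ * Q' i₂)))
      = max (kabs Fq a * kabs Fq (P i₁) * vnorm Fq Q)
          (kabs Fq b * kabs Fq (P' i₁) * vnorm Fq Q') := by
    intro i₁
    have h2 := h (a * P i₁) (b * P' i₁)
    have e1 : (Finset.univ.sup fun i₂ : Fin n₂ =>
        kabs Fq (a * (P i₁ * Q i₂) + b * (P' i₁ * Q' i₂)))
        = vnorm Fq ((a * P i₁) • Q + (b * P' i₁) • Q') := by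
      refine Finset.sup_congr rfl fun i₂ _ => ?_
      simp only [Pi.add_apply, Pi.smul_apply, smul_eq_mul]
      congr 1
      ring
    rw [e1, h2, vnorm_smul, vnorm_smul, kabs_mul', kabs_mul']
  have lhs : vnorm Fq (a • (fun i : Fin n₁ × Fin n₂ => P i.1 * Q i.2)
      + b • (fun i : Fin n₁ × Fin n₂ => P' i.1 * Q' i.2))
      = max (kabs Fq a * (vnorm Fq P * vnorm Fq Q))
          (kabs Fq b * (vnorm Fq P' * vnorm Fq Q')) := by
    unfold vnorm
    rw [← Finset.univ_product_univ, Finset.sup_product_left]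
    calc (Finset.univ.sup fun i₁ : Fin n₁ => Finset.univ.sup fun i₂ : Fin n₂ =>
            kabs Fq ((a • (fun i : Fin n₁ × Fin n₂ => P i.1 * Q i.2)
              + b • fun i : Fin n₁ × Fin n₂ => P' i.1 * Q' i.2) (i₁, i₂)))
        = Finset.univ.sup fun i₁ : Fin n₁ =>
            max (kabs Fq a * kabs Fq (P i₁) * vnorm Fq Q)
              (kabs Fq b * kabs Fq (P' i₁) * vnorm Fq Q') := by
          refine Finset.sup_congr rfl fun i₁ _ => ?_
          rw [← key i₁]
          rfl
      _ = (Finset.univ.sup fun i₁ : Fin n₁ => kabs Fq a * kabs Fq (P i₁) * vnorm Fq Q)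
            ⊔ (Finset.univ.sup fun i₁ : Fin n₁ =>
              kabs Fq b * kabs Fq (P' i₁) * vnorm Fq Q') := by
          rw [← Finset.sup_sup]
          rfl
      _ = _ := by
          have e2 : (Finset.univ.sup fun i₁ : Fin n₁ =>
              kabs Fq a * kabs Fq (P i₁) * vnorm Fq Q)
              = kabs Fq a * (vnorm Fq P * vnorm Fq Q) := by
            rw [show (kabs Fq a * (vnorm Fq P * vnorm Fq Q))
                = (kabs Fq a * vnorm Fq Q) * vnorm Fq P by ring]
            unfold vnorm
            rw [NNReal.mul_finset_sup]
            exact (Finset.sup_congr rfl fun i₁ _ => by ring).symm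
          have e3 : (Finset.univ.sup fun i₁ : Fin n₁ =>
              kabs Fq b * kabs Fq (P' i₁) * vnorm Fq Q')
              = kabs Fq b * (vnorm Fq P' * vnorm Fq Q') := by
            rw [show (kabs Fq b * (vnorm Fq P' * vnorm Fq Q'))
                = (kabs Fq b * vnorm Fq Q') * vnorm Fq P' by ring]
            unfold vnorm
            rw [NNReal.mul_finset_sup]
            exact (Finset.sup_congr rfl fun i₁ _ => by ring).symm
          rw [e2, e3]
          rfl
  rw [lhs, vnorm_smul, vnorm_smul, vnorm_kron, vnorm_kron]

end Aux

set_option maxHeartbeats 1600000 in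
/-- **Kronecker products of weakly Hadamard matrices.** If `A` is `(l₁, q^{m₁})`-weakly
Hadamard of size `n₁ × n₁` and `B` is `(l₂, q^{m₂})`-weakly Hadamard of size `n₂ × n₂` over
`Fq[x]`, then the Kronecker product `A ⊗ B` is `(l₁ + l₂, q^{m₁n₂ + m₂n₁})`-weakly
Hadamard. -/
theorem kronecker_isWeaklyHadamard (Fq : Type) [Field Fq] [Fintype Fq]
    (n₁ n₂ l₁ l₂ m₁ m₂ : ℕ) (hn₁ : 1 ≤ n₁) (hn₂ : 1 ≤ n₂)
    (hm₁ : m₁ ≤ l₁ * n₁) (hm₂ : m₂ ≤ l₂ * n₂)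
    (A : Matrix (Fin n₁) (Fin n₁) (Polynomial Fq))
    (B : Matrix (Fin n₂) (Fin n₂) (Polynomial Fq))
    (hA : IsWeaklyHadamard Fq l₁ m₁ A) (hB : IsWeaklyHadamard Fq l₂ m₂ B) :
    IsWeaklyHadamard Fq (l₁ + l₂) (m₁ * n₂ + m₂ * n₁) (Matrix.kroneckerMap (· * ·) A B) := by
  obtain ⟨hAdeg, ⟨hAnz, hAorth⟩, hAdet⟩ := hA
  obtain ⟨hBdeg, ⟨hBnz, hBorth⟩, hBdet⟩ := hB
  refine ⟨?_, ⟨?_, ?_⟩, ?_⟩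
  · rintro ⟨i₁, i₂⟩ ⟨j₁, j₂⟩
    calc (A i₁ j₁ * B i₂ j₂).degree ≤ (A i₁ j₁).degree + (B i₂ j₂).degree :=
          Polynomial.degree_mul_le _ _
      _ ≤ (l₁ : WithBot ℕ) + (l₂ : WithBot ℕ) := add_le_add (hAdeg i₁ j₁) (hBdeg i₂ j₂)
      _ = ((l₁ + l₂ : ℕ) : WithBot ℕ) := by push_cast; ring
  · rintro ⟨j₁, j₂⟩ h0
    obtain ⟨i₁, hi₁⟩ := Function.ne_iff.mp (hAnz j₁)
    obtain ⟨i₂, hi₂⟩ := Function.ne_iff.mp (hBnz j₂)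
    have := congrFun h0 (i₁, i₂)
    simp only [Matrix.kroneckerMap_apply, Pi.zero_apply] at this
    rw [polyToK_mul] at this
    exact mul_ne_zero hi₁ hi₂ this
  · rintro ⟨j₁, j₂⟩ ⟨j₁', j₂'⟩ hne
    have key : ∀ (c₁ c₁' : Fin n₁) (c₂ c₂' : Fin n₂), (c₁, c₂) ≠ (c₁', c₂') →
        IsOrthPair Fq
          (fun i : Fin n₁ × Fin n₂ => polyToK Fq (A i.1 c₁) * polyToK Fq (B i.2 c₂))
          (fun i : Fin n₁ × Fin n₂ => polyToK Fq (A i.1 c₁') * polyToK Fq (B i.2 c₂')) := by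
      intro c₁ c₁' c₂ c₂' hcc
      by_cases h1 : c₁ = c₁'
      · subst h1
        have h2 : c₂ ≠ c₂' := fun h => hcc (by rw [h])
        exact orth_kron_right Fq (fun i₁ => polyToK Fq (A i₁ c₁))
          (fun i₁ => polyToK Fq (A i₁ c₁)) (fun i₂ => polyToK Fq (B i₂ c₂))
          (fun i₂ => polyToK Fq (B i₂ c₂')) (hBorth c₂ c₂' h2)
      · exact orth_kron_left Fq (fun i₁ => polyToK Fq (A i₁ c₁))
          (fun i₁ => polyToK Fq (A i₁ c₁')) (fun i₂ => polyToK Fq (B i₂ c₂))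
          (fun i₂ => polyToK Fq (B i₂ c₂')) (hAorth c₁ c₁' h1)
    have hrw : ∀ (c₁ : Fin n₁) (c₂ : Fin n₂),
        (fun i : Fin n₁ × Fin n₂ =>
          polyToK Fq (Matrix.kroneckerMap (· * ·) A B i (c₁, c₂)))
        = fun i : Fin n₁ × Fin n₂ =>
          polyToK Fq (A i.1 c₁) * polyToK Fq (B i.2 c₂) := by
      intro c₁ c₂
      funext i
      show polyToK Fq (A i.1 c₁ * B i.2 c₂) = _
      exact polyToK_mul Fq _ _
    show IsOrthPair Fq
        (fun i : Fin n₁ × Fin n₂ =>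
          polyToK Fq (Matrix.kroneckerMap (· * ·) A B i (j₁, j₂)))
        (fun i : Fin n₁ × Fin n₂ =>
          polyToK Fq (Matrix.kroneckerMap (· * ·) A B i (j₁', j₂')))
    rw [hrw j₁ j₂, hrw j₁' j₂']
    exact key j₁ j₁' j₂ j₂' hne
  · have hd : (Matrix.kroneckerMap (· * ·) A B).det = A.det ^ n₂ * B.det ^ n₁ := by
      rw [Matrix.det_kronecker, Fintype.card_fin, Fintype.card_fin]
    rw [hd, polyToK_mul, kabs_mul', polyToK_pow, polyToK_pow, kabs_pow', kabs_pow',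
      hAdet, hBdet, ← pow_mul, ← pow_mul, ← pow_add]
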